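/- Let d ∈ (0,1) and define the WENO-M mapping function g(ω) = ω(d + d² − 3dω + ω²)/(d² + (1 − 2d)ω) for ω ∈ [0,1]. Then g is monotone non-decreasing on [0,1]: for all ω₁, ω₂ ∈ [0,1] with ω₁ ≤ ω₂, one has g(ω₁) ≤ g(ω₂). -/
import Mathlib


/-- For d ∈ (0,1), the WENO-M mapping function
`g(ω) = ω(d + d² − 3dω + ω²)/(d² + (1 − 2d)ω)` is monotone non-decreasing on [0,1]. -/
theorem wenoM_monotone (d : ℝ) (hd : d ∈ Set.Ioo (0:ℝ) 1)
    (g : ℝ → ℝ)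
    (hg : ∀ ω : ℝ, g ω = ω * (d + d^2 - 3*d*ω + ω^2) / (d^2 + (1 - 2*d)*ω)) :
    ∀ ω₁ ∈ Set.Icc (0:ℝ) 1, ∀ ω₂ ∈ Set.Icc (0:ℝ) 1, ω₁ ≤ ω₂ → g ω₁ ≤ g ω₂ := by
  obtain ⟨hd0, hd1⟩ := hd
  rintro a ⟨ha0, ha1⟩ b ⟨hb0, hb1⟩ hab
  have hpos : ∀ ω : ℝ, 0 ≤ ω → ω ≤ 1 → 0 < d^2 + (1 - 2*d)*ω := by
    intro ω h0 h1
    rcases le_total (2*d) 1 with h | h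
    · nlinarith [mul_pos hd0 hd0, mul_nonneg (by linarith : (0:ℝ) ≤ 1 - 2*d) h0]
    · nlinarith [sq_nonneg (1-d), mul_nonneg (by linarith : (0:ℝ) ≤ 2*d - 1)
        (by linarith : (0:ℝ) ≤ 1 - ω)]
  have hDa : 0 < d^2 + (1 - 2*d)*a := hpos a ha0 ha1
  have hDb : 0 < d^2 + (1 - 2*d)*b := hpos b hb0 hb1
  -- the key cofactor G is nonnegative
  have key : 0 ≤ d*(1-d)*((d-a)^2 - (d-a)*(b-d) + (b-d)^2)
      - (1-2*d)*(d-a)*(b-d)*((b-d)-(d-a)) := by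
    rcases le_total (a + b) (2*d) with h | h
    · have hadd : a ≤ d := by linarith
      have h1 : 0 ≤ (d-a) * (2*d - a - b) * (d^2 + (1 - 2*d)*b) :=
        mul_nonneg (mul_nonneg (by linarith) (by linarith)) hDb.le
      have h2 : 0 ≤ d*(1-d)*(b-d)^2 :=
        mul_nonneg (mul_nonneg hd0.le (by linarith)) (sq_nonneg _)
      nlinarith [h1, h2]
    · have hbd : d ≤ b := by linarith
      have h1 : 0 ≤ (b-d) * (a + b - 2*d) * (d^2 + (1 - 2*d)*a) :=
        mul_nonneg (mul_nonneg (by linarith) (by linarith)) hDa.le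
      have h2 : 0 ≤ d*(1-d)*(d-a)^2 :=
        mul_nonneg (mul_nonneg hd0.le (by linarith)) (sq_nonneg _)
      nlinarith [h1, h2]
  rw [hg, hg, div_le_div_iff₀ hDa hDb]
  nlinarith [mul_nonneg (sub_nonneg.2 hab) key]
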